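/- Let D be a finite subset of ℕ^d \ {0} that is an antichain with respect to the natural partial order, and consider the collection of all generalized numerical semigroups S ⊆ ℕ^d with D ⊆ H(S). Then a GNS S in this collection is maximal in the collection with respect to set inclusion if and only if S is quasi-irreducible and FA(S) = D. -/

import Mathlib

open Finset

/-- A generalized numerical semigroup (GNS) in `ℕ^d`: contains `0`, is closed under
componentwise addition, and has finite complement. -/
def IsGNS {d : ℕ} (S : Set (Fin d → ℕ)) : Prop :=
  (0 : Fin d → ℕ) ∈ S ∧ (∀ a ∈ S, ∀ b ∈ S, a + b ∈ S) ∧ Sᶜ.Finite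

/-- A relaxed monomial order on `ℕ^d`: a (strict) total order `r` such that
`r v w → r v (w + u)` and `0` is below every nonzero element. -/
def IsRMO {d : ℕ} (r : (Fin d → ℕ) → (Fin d → ℕ) → Prop) : Prop :=
  IsStrictTotalOrder (Fin d → ℕ) r ∧
  (∀ v w u : Fin d → ℕ, r v w → r v (w + u)) ∧
  (∀ v : Fin d → ℕ, v ≠ 0 → r 0 v)

/-- `F` is the Frobenius gap of `S` with respect to the order `r`, i.e. the
`r`-maximum of the gap set `ℕ^d \ S`. -/
def IsFrobGapWrt {d : ℕ} (S : Set (Fin d → ℕ))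
    (r : (Fin d → ℕ) → (Fin d → ℕ) → Prop) (F : Fin d → ℕ) : Prop :=
  F ∉ S ∧ ∀ x, x ∉ S → x ≠ F → r x F

/-- `F` is a Frobenius allowable gap of `S`: it is the Frobenius gap with respect to
some relaxed monomial order. -/
def FrobAllowable {d : ℕ} (S : Set (Fin d → ℕ)) (F : Fin d → ℕ) : Prop :=
  ∃ r, IsRMO r ∧ IsFrobGapWrt S r F

/-- `F` is a maximal gap of `S` with respect to the natural (componentwise)
partial order on `ℕ^d`. -/
def MaxGap {d : ℕ} (S : Set (Fin d → ℕ)) (F : Fin d → ℕ) : Prop :=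
  F ∉ S ∧ ∀ x, x ∉ S → F ≤ x → x = F

/-- The set of Frobenius allowable gaps of `S`, i.e. the maximal elements of the gap
set under the natural partial order. -/
def FA {d : ℕ} (S : Set (Fin d → ℕ)) : Set (Fin d → ℕ) := {F | MaxGap S F}

/-- The set of pseudo-Frobenius gaps of `S`. -/
def PF {d : ℕ} (S : Set (Fin d → ℕ)) : Set (Fin d → ℕ) :=
  {P | P ∉ S ∧ ∀ s ∈ S, s ≠ 0 → P + s ∈ S}

/-- `S` is quasi-irreducible: for every gap `x`, either `2x` is Frobenius allowable or
`F - x ∈ S` for some Frobenius allowable gap `F`. -/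
def QuasiIrreducible {d : ℕ} (S : Set (Fin d → ℕ)) : Prop :=
  ∀ x, x ∉ S → (x + x ∈ FA S ∨ ∃ F ∈ FA S, ∃ s ∈ S, x + s = F)

/-- `S` is a Frobenius GNS with Frobenius gap `F`: the gap set has `F` as its unique
maximal element under the natural partial order. -/
def IsFrobeniusGNS {d : ℕ} (S : Set (Fin d → ℕ)) (F : Fin d → ℕ) : Prop :=
  IsGNS S ∧ MaxGap S F ∧ ∀ x, MaxGap S x → x = F

/-- `‖F‖ = ∏ i (F^(i) + 1)`, the number of lattice points in the box `[0, F]`. -/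
def normF {d : ℕ} (F : Fin d → ℕ) : ℕ := ∏ i, (F i + 1)

/-- `N(F)`: the number of Frobenius GNS in `ℕ^d` with Frobenius gap `F`. -/
noncomputable def NF {d : ℕ} (F : Fin d → ℕ) : ℕ :=
  {S : Set (Fin d → ℕ) | IsFrobeniusGNS S F}.ncard

lemma Set.Finite.exists_maximal_wrt {α β : Type*} [PartialOrder β] (f : α → β) (s : Set α)
    (h : s.Finite) (hs : s.Nonempty) : ∃ a ∈ s, ∀ a' ∈ s, f a ≤ f a' → f a = f a' := by
  obtain ⟨a, ha, hm⟩ := Set.Finite.exists_maximalFor f s h hs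
  exact ⟨a, ha, fun a' ha' hle => le_antisymm hle (hm ha' hle)⟩

lemma gap_le_maxGap {d : ℕ} {S : Set (Fin d → ℕ)} (hfin : Sᶜ.Finite)
    {x : Fin d → ℕ} (hx : x ∉ S) : ∃ F, MaxGap S F ∧ x ≤ F := by
  have hA : {y : Fin d → ℕ | y ∉ S ∧ x ≤ y}.Finite :=
    hfin.subset (fun y hy => hy.1)
  obtain ⟨F, hF, hFmax⟩ := hA.exists_maximal_wrt id _ ⟨x, hx, le_refl x⟩
  exact ⟨F, ⟨hF.1, fun y hy hFy => (hFmax y ⟨hy, le_trans hF.2 hFy⟩ hFy).symm⟩, hF.2⟩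

/-- Let `D` be a finite antichain in `ℕ^d \ {0}`. Among the GNS `S` with `D ⊆ H(S)`,
the maximal ones (under inclusion) are exactly the quasi-irreducible GNS with
`FA(S) = D`. -/
theorem maximal_iff_quasiIrreducible {d : ℕ} (D : Set (Fin d → ℕ)) (hDfin : D.Finite)
    (hD0 : (0 : Fin d → ℕ) ∉ D) (hDanti : ∀ x ∈ D, ∀ y ∈ D, x ≤ y → x = y)
    (S : Set (Fin d → ℕ)) (hS : IsGNS S) (hDS : D ⊆ Sᶜ) :
    (∀ S' : Set (Fin d → ℕ), IsGNS S' → D ⊆ S'ᶜ → S ⊆ S' → S' = S) ↔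
      (QuasiIrreducible S ∧ FA S = D) := by
  obtain ⟨hS0, hSadd, hSfin⟩ := hS
  constructor
  · intro hmax
    -- Step 1: FA S ⊆ D
    have hFA_sub : FA S ⊆ D := by
      intro F hF
      by_contra hFD
      have hF' : MaxGap S F := hF
      have hF0 : F ≠ 0 := fun h => hF'.1 (h ▸ hS0)
      have hFS : ∀ s ∈ S, F + s ∈ insert F S := by
        intro s hs
        by_cases h : F + s ∈ S
        · exact Or.inr h
        · exact Or.inl (hF'.2 _ h le_self_add)
      have hFF : F + F ∈ S := by
        by_contra h
        have h2 : F + F = F := hF'.2 _ h le_self_add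
        have : F + F = F + 0 := by simpa using h2
        exact hF0 (add_left_cancel this)
      have hGNS' : IsGNS (insert F S) := by
        refine ⟨Or.inr hS0, ?_, hSfin.subset (fun y hy => fun hyS => hy (Or.inr hyS))⟩
        intro a ha b hb
        rcases ha with rfl | ha <;> rcases hb with rfl | hb
        · exact Or.inr hFF
        · exact hFS b hb
        · rw [add_comm]; exact hFS a ha
        · exact Or.inr (hSadd a ha b hb)
      have hD' : D ⊆ (insert F S)ᶜ := by
        intro y hy
        intro hyi
        rcases hyi with rfl | hyS
        · exact hFD hy
        · exact hDS hy hyS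
      have heq := hmax _ hGNS' hD' (Set.subset_insert F S)
      exact hF'.1 (heq ▸ Set.mem_insert F S)
    have hD_sub : D ⊆ FA S := by
      intro x hxD
      have hxS : x ∉ S := hDS hxD
      obtain ⟨F, hF, hxF⟩ := gap_le_maxGap hSfin hxS
      have hxe : x = F := hDanti x hxD F (hFA_sub hF) hxF
      exact hxe ▸ hF
    have hFAeq : FA S = D := Set.Subset.antisymm hFA_sub hD_sub
    refine ⟨?_, hFAeq⟩
    -- Step 2: quasi-irreducible
    intro x0 hx0
    by_contra hbad0
    have hBadfin : {x : Fin d → ℕ | x ∉ S ∧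
        ¬(x + x ∈ FA S ∨ ∃ F ∈ FA S, ∃ s ∈ S, x + s = F)}.Finite :=
      hSfin.subset (fun y hy => hy.1)
    obtain ⟨x, ⟨hxS, hxne⟩, hxmax⟩ :=
      hBadfin.exists_maximal_wrt id _ ⟨x0, hx0, hbad0⟩
    push_neg at hxne
    obtain ⟨hx2FA, hxF⟩ := hxne
    have hnotbad : ∀ y, y ∉ S → x ≤ y → x ≠ y →
        (y + y ∈ FA S ∨ ∃ F ∈ FA S, ∃ s ∈ S, y + s = F) := by
      intro y hyS hxy hne
      by_contra hc
      exact hne (hxmax y ⟨hyS, hc⟩ hxy)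
    have hxFA : x ∉ FA S := fun h => hxF x h 0 hS0 (add_zero x)
    have hx0' : x ≠ 0 := fun h => hxS (h ▸ hS0)
    have hcancel : ∀ s : Fin d → ℕ, x + s = x → s = 0 := by
      intro s h
      have : x + s = x + 0 := by simpa using h
      exact add_left_cancel this
    -- x is pseudo-Frobenius
    have hPF : ∀ s ∈ S, s ≠ 0 → x + s ∈ S := by
      intro s hs hs0
      by_contra hxs
      have h1 : x ≠ x + s := fun h => hs0 (hcancel s h.symm)
      rcases hnotbad (x + s) hxs le_self_add h1 with h2 | ⟨F, hF, s', hs', hse⟩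
      · -- (x+s)+(x+s) ∈ FA S
        by_cases hz : x + (s + s) ∈ S
        · exact hxF _ h2 _ hz (by ring)
        · have hxz : x ≠ x + (s + s) := fun h => hs0 (by
            have := hcancel (s + s) h.symm
            have h2 : s + s = s + 0 := by simpa using this
            simpa using add_left_cancel h2)
          rcases hnotbad _ hz le_self_add hxz with h3 | ⟨F, hF, s', hs', hse⟩
          · have hle : (x + s) + (x + s) ≤ (x + (s + s)) + (x + (s + s)) := by
              have hrw : (x + (s + s)) + (x + (s + s)) = ((x + s) + (x + s)) + (s + s) := by
                ring
              rw [hrw]; exact le_self_add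
            have heq : (x + (s + s)) + (x + (s + s)) = (x + s) + (x + s) :=
              (h2 : MaxGap S _).2 _ (h3 : MaxGap S _).1 hle
            have heq' : ((x + s) + (x + s)) + (s + s) = ((x + s) + (x + s)) + 0 := by
              rw [add_zero]
              calc ((x + s) + (x + s)) + (s + s)
                  = (x + (s + s)) + (x + (s + s)) := by ring
                _ = (x + s) + (x + s) := heq
            have hss : s + s = 0 := add_left_cancel heq'
            have : s + s = s + 0 := by simpa using hss
            exact hs0 (add_left_cancel this)
          · refine hxF F hF ((s + s) + s') (hSadd _ (hSadd _ hs _ hs) _ hs') ?_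
            rw [← hse]; ring
      · exact hxF F hF (s + s') (hSadd _ hs _ hs') (by rw [← hse]; ring)
    -- 2x ∈ S
    have h2x : x + x ∈ S := by
      by_contra h2xS
      have hne : x ≠ x + x := fun h => hx0' (hcancel x h.symm)
      have h4x : (x + x) + (x + x) ∈ FA S := by
        rcases hnotbad (x + x) h2xS le_self_add hne with h | ⟨F, hF, s, hs, hse⟩
        · exact h
        · by_cases hs0 : s = 0
          · subst hs0
            rw [add_zero] at hse
            exact absurd hF (hse ▸ hx2FA)
          · have h1 : x + s ∈ S := hPF s hs hs0
            have h10 : x + s ≠ 0 := by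
              intro h
              have := congrArg (fun v => v) h
              have hx0'' : x = 0 := by
                funext i
                have := congrFun h i
                simpa using (Nat.add_eq_zero.mp this).1
              exact hx0' hx0''
            have h2 : x + (x + s) ∈ S := hPF _ h1 h10
            have : F ∈ S := by rw [← hse]; convert h2 using 1; ring
            exact ((hF : MaxGap S F).1 this).elim
      have h3xS : x + (x + x) ∉ S := fun h => hxF _ h4x _ h (by ring)
      have hne3 : x ≠ x + (x + x) := fun h => hx0' (by
        have := hcancel (x + x) h.symm
        funext i
        have := congrFun this i
        simpa using (Nat.add_eq_zero.mp this).1)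
      rcases hnotbad _ h3xS le_self_add hne3 with h6 | ⟨F, hF, s, hs, hse⟩
      · have hle : (x + x) + (x + x) ≤ (x + (x + x)) + (x + (x + x)) := by
          have hrw : (x + (x + x)) + (x + (x + x)) = ((x + x) + (x + x)) + (x + x) := by
            ring
          rw [hrw]; exact le_self_add
        have heq := (h4x : MaxGap S _).2 _ (h6 : MaxGap S _).1 hle
        have heq' : ((x + x) + (x + x)) + (x + x) = ((x + x) + (x + x)) + 0 := by
          rw [add_zero]
          calc ((x + x) + (x + x)) + (x + x)
              = (x + (x + x)) + (x + (x + x)) := by ring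
            _ = (x + x) + (x + x) := heq
        have hxx : x + x = 0 := add_left_cancel heq'
        exact hx0' (by
          funext i
          have := congrFun hxx i
          simpa using (Nat.add_eq_zero.mp this).1)
      · by_cases hs0 : s = 0
        · subst hs0
          rw [add_zero] at hse
          have hle : F ≤ (x + x) + (x + x) := by
            rw [← hse]
            calc x + (x + x) ≤ (x + (x + x)) + x := le_self_add
              _ = (x + x) + (x + x) := by ring
          have heq := (hF : MaxGap S F).2 _ (h4x : MaxGap S _).1 hle
          have heq' : (x + (x + x)) + x = (x + (x + x)) + 0 := by
            rw [add_zero]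
            calc (x + (x + x)) + x = (x + x) + (x + x) := by ring
              _ = F := heq
              _ = x + (x + x) := hse.symm
          exact hx0' (add_left_cancel heq')
        · have h1 : x + s ∈ S := hPF s hs hs0
          have h10 : x + s ≠ 0 := by
            intro h
            exact hx0' (by
              funext i
              have := congrFun h i
              simpa using (Nat.add_eq_zero.mp this).1)
          have h2 : x + (x + s) ∈ S := hPF _ h1 h10
          have h20 : x + (x + s) ≠ 0 := by
            intro h
            exact hx0' (by
              funext i
              have := congrFun h i
              simpa using (Nat.add_eq_zero.mp this).1)
          have h3 : x + (x + (x + s)) ∈ S := hPF _ h2 h20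
          have : F ∈ S := by rw [← hse]; convert h3 using 1; ring
          exact (hF : MaxGap S F).1 this
    -- insert x S is a bigger valid GNS
    have hGNS' : IsGNS (insert x S) := by
      refine ⟨Or.inr hS0, ?_, hSfin.subset (fun y hy => fun hyS => hy (Or.inr hyS))⟩
      intro a ha b hb
      rcases ha with rfl | ha <;> rcases hb with rfl | hb
      · exact Or.inr h2x
      · by_cases hb0 : b = 0
        · subst hb0; rw [add_zero]; exact Or.inl rfl
        · exact Or.inr (hPF b hb hb0)
      · by_cases ha0 : a = 0
        · subst ha0; rw [zero_add]; exact Or.inl rfl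
        · rw [add_comm]; exact Or.inr (hPF a ha ha0)
      · exact Or.inr (hSadd a ha b hb)
    have hD' : D ⊆ (insert x S)ᶜ := by
      intro y hy hyi
      rcases hyi with rfl | hyS
      · exact hxFA (hFAeq ▸ hy)
      · exact hDS hy hyS
    have heq := hmax _ hGNS' hD' (Set.subset_insert x S)
    exact hxS (heq ▸ Set.mem_insert x S)
  · rintro ⟨hQI, hFAeq⟩ S' hS'GNS hDS' hSS'
    refine Set.Subset.antisymm ?_ hSS'
    intro y hyS'
    by_contra hyS
    rcases hQI y hyS with h2 | ⟨F, hF, s, hs, hse⟩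
    · have hmem : y + y ∈ S' := hS'GNS.2.1 y hyS' y hyS'
      exact hDS' (hFAeq ▸ h2) hmem
    · have hmem : F ∈ S' := hse ▸ hS'GNS.2.1 y hyS' s (hSS' hs)
      exact hDS' (hFAeq ▸ hF) hmem
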